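/- For a nontrivial element g ∈ Γ, the set of boundary points fixed by g acting on Ω contains at most the two points g^{+∞} = ggg⋯ and g^{−∞} = g⁻¹g⁻¹g⁻¹⋯ (interpreted as reduced infinite words); in particular the fixed-point set is finite. -/

import Mathlib

open MeasureTheory
open scoped ENNReal

/-- A directed letter: generators of `ℤ₂ * ⋯ * ℤ₂ * ℤ * ⋯ * ℤ` (s copies of ℤ₂,
t copies of ℤ) together with the inverses of the infinite-order generators. -/
abbrev Letter (s t : ℕ) := Sum (Fin s) (Fin t × Bool)

/-- Formal inverse of a letter. -/
def Letter.inv {s t : ℕ} : Letter s t → Letter s t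
  | .inl i => .inl i
  | .inr (j, b) => .inr (j, !b)

/-- A list of letters is a reduced word if no letter is followed by its inverse. -/
def RedWord {s t : ℕ} (w : List (Letter s t)) : Prop :=
  w.Chain' (fun a b => b ≠ a.inv)

/-- The boundary of the tree: semi-infinite reduced words. -/
def Boundary (s t : ℕ) : Type := {ω : ℕ → Letter s t // ∀ k, ω (k + 1) ≠ (ω k).inv}

/-- The cylinder set of boundary points beginning with the word `x`. -/
def cyl {s t : ℕ} (x : List (Letter s t)) : Set (Boundary s t) :=
  {ω | ∀ i, (h : i < x.length) → ω.1 i = x.get ⟨i, h⟩}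

/-- The Borel σ-algebra on the boundary, generated by the (nontrivial) cylinder sets. -/
instance {s t : ℕ} : MeasurableSpace (Boundary s t) :=
  MeasurableSpace.generateFrom
    {S | ∃ x : List (Letter s t), RedWord x ∧ x ≠ [] ∧ S = cyl x}

/-- The shift, deleting the first letter of a boundary word. -/
def shift {s t : ℕ} (ω : Boundary s t) : Boundary s t :=
  ⟨fun k => ω.1 (k + 1), fun k => ω.2 (k + 1)⟩

/-- Left multiplication of a boundary word by a single letter, with cancellation. -/
def prepend {s t : ℕ} (a : Letter s t) (ω : Boundary s t) : Boundary s t :=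
  if h : ω.1 0 = a.inv then shift ω
  else ⟨fun k => match k with
        | 0 => a
        | k + 1 => ω.1 k,
      by
        intro k
        match k with
        | 0 => simpa using h
        | k + 1 => exact ω.2 k⟩

/-- The action of a word `w ∈ Γ` on the boundary by left multiplication and reduction. -/
def act {s t : ℕ} (w : List (Letter s t)) (ω : Boundary s t) : Boundary s t :=
  w.foldr prepend ω

/-- The reduced word representing the inverse group element. -/
def invWord {s t : ℕ} (w : List (Letter s t)) : List (Letter s t) :=
  (w.reverse).map Letter.inv

section AuxFixed

variable {s t : ℕ}

lemma Letter.inv_inv (a : Letter s t) : a.inv.inv = a := by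
  rcases a with i | ⟨j, b⟩ <;> simp [Letter.inv]

lemma prepend_fst_of_ne (a : Letter s t) (ω : Boundary s t) (h : ¬ ω.1 0 = a.inv) :
    ∀ k, (prepend a ω).1 k =
      (fun k => match k with | 0 => a | k + 1 => ω.1 k : ℕ → Letter s t) k := by
  intro k
  exact congrArg (fun x : Boundary s t => x.1 k) (dif_neg h : prepend a ω = _)

lemma prepend_fst_of_eq (a : Letter s t) (ω : Boundary s t) (h : ω.1 0 = a.inv) :
    ∀ k, (prepend a ω).1 k = ω.1 (k + 1) := by
  intro k
  exact congrArg (fun x : Boundary s t => x.1 k) (dif_pos h : prepend a ω = shift ω)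

/-- Structure of the action of a reduced word on a boundary point: there is a
cancellation depth `d`, the first `d` letters of `ω` are the inverses of the
last `d` letters of `w` (in reverse order), and the result is the first
`w.length - d` letters of `w` followed by `ω` shifted by `d`. -/
lemma act_spec (a₀ : Letter s t) :
    ∀ w : List (Letter s t), RedWord w → ∀ ω : Boundary s t,
    ∃ d, d ≤ w.length ∧
      (∀ i, i < d → ω.1 i = (w.getD (w.length - 1 - i) a₀).inv) ∧
      (d < w.length → ¬ ω.1 d = (w.getD (w.length - 1 - d) a₀).inv) ∧
      (∀ i, (act w ω).1 i =
        if i < w.length - d then w.getD i a₀ else ω.1 (i - (w.length - d) + d)) := by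
  intro w
  induction w with
  | nil =>
      intro _ ω
      refine ⟨0, le_refl _, fun i hi => absurd hi (Nat.not_lt_zero i),
        fun h => absurd h (by simp), fun i => ?_⟩
      simp [act]
  | cons a w ih =>
      intro hw ω
      have hw' : RedWord w := (List.isChain_cons.1 hw).2
      have hhead : ∀ b ∈ w.head?, ¬ b = a.inv := (List.isChain_cons.1 hw).1
      obtain ⟨d, hdle, hpre, hex, hact⟩ := ih hw' ω
      have hacons : act (a :: w) ω = prepend a (act w ω) := rfl
      simp only [List.length_cons]
      rcases Nat.lt_or_ge d w.length with hd | hd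
      · -- no cancellation happens with the new letter `a`
        have hwne : w ≠ [] := by
          intro h; rw [h] at hd; simp at hd
        have h0 : (act w ω).1 0 = w.head hwne := by
          have c1 : 0 < w.length - d := by omega
          rw [hact 0, if_pos c1, List.getD_eq_getElem (hn := by omega),
            List.getElem_zero]
        have hne : ¬ (act w ω).1 0 = a.inv := by
          rw [h0]
          exact hhead _ (by rw [List.head?_eq_head hwne]; rfl)
        refine ⟨d, ?_, ?_, ?_, ?_⟩
        · omega
        · intro i hi
          have harith : w.length + 1 - 1 - i = (w.length - 1 - i) + 1 := by omega
          rw [harith, List.getD_cons_succ]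
          exact hpre i hi
        · intro _
          have harith : w.length + 1 - 1 - d = (w.length - 1 - d) + 1 := by omega
          rw [harith, List.getD_cons_succ]
          exact hex hd
        · intro i
          rw [hacons, prepend_fst_of_ne a _ hne i]
          rcases i with _ | k
          · have c1 : 0 < w.length + 1 - d := by omega
            show a = _
            rw [if_pos c1, List.getD_cons_zero]
          · show (act w ω).1 k = _
            rw [hact k]
            by_cases hk : k < w.length - d
            · have c1 : k + 1 < w.length + 1 - d := by omega
              rw [if_pos hk, if_pos c1, List.getD_cons_succ]
            · have c1 : ¬ k + 1 < w.length + 1 - d := by omega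
              rw [if_neg hk, if_neg c1]
              exact congrArg _ (by omega)
      · -- the whole of `w` has been cancelled: `d = w.length`
        have hdw : d = w.length := le_antisymm hdle hd
        have h0 : (act w ω).1 0 = ω.1 d := by
          have c1 : ¬ 0 < w.length - d := by omega
          rw [hact 0, if_neg c1]
          exact congrArg _ (by omega)
        by_cases hc : ω.1 d = a.inv
        · -- `a` also cancels
          have h0' : (act w ω).1 0 = a.inv := by rw [h0]; exact hc
          refine ⟨d + 1, ?_, ?_, ?_, ?_⟩
          · omega
          · intro i hi
            rcases Nat.lt_or_ge i d with hid | hid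
            · have harith : w.length + 1 - 1 - i = (w.length - 1 - i) + 1 := by omega
              rw [harith, List.getD_cons_succ]
              exact hpre i hid
            · have hieq : i = d := by omega
              have harith : w.length + 1 - 1 - d = 0 := by omega
              rw [hieq, harith, List.getD_cons_zero]
              exact hc
          · intro h
            exact absurd h (by omega)
          · intro i
            have c1 : ¬ i + 1 < w.length - d := by omega
            have c2 : ¬ i < w.length + 1 - (d + 1) := by omega
            rw [hacons, prepend_fst_of_eq a _ h0', hact (i + 1), if_neg c1, if_neg c2]
            exact congrArg _ (by omega)
        · -- no cancellation: `a` is prepended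
          have hne : ¬ (act w ω).1 0 = a.inv := by rw [h0]; exact hc
          refine ⟨d, ?_, ?_, ?_, ?_⟩
          · omega
          · intro i hi
            have harith : w.length + 1 - 1 - i = (w.length - 1 - i) + 1 := by omega
            rw [harith, List.getD_cons_succ]
            exact hpre i hi
          · intro _
            have harith : w.length + 1 - 1 - d = 0 := by omega
            rw [harith, List.getD_cons_zero]
            exact hc
          · intro i
            rw [hacons, prepend_fst_of_ne a _ hne i]
            rcases i with _ | k
            · have c1 : 0 < w.length + 1 - d := by omega
              show a = _
              rw [if_pos c1, List.getD_cons_zero]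
            · show (act w ω).1 k = _
              have c1 : ¬ k < w.length - d := by omega
              have c2 : ¬ k + 1 < w.length + 1 - d := by omega
              rw [hact k, if_neg c1, if_neg c2]
              exact congrArg _ (by omega)

lemma redword_getD (w : List (Letter s t)) (hw : RedWord w) (a₀ : Letter s t)
    (i : ℕ) (h : i + 1 < w.length) :
    ¬ w.getD (i + 1) a₀ = (w.getD i a₀).inv := by
  have h1 := List.isChain_iff_getElem.1 hw i (by omega)
  rwa [List.getD_eq_getElem (hn := by omega), List.getD_eq_getElem (hn := by omega)]

/-- Any two fixed points with the same cancellation depth are equal. -/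
lemma fixed_determined (g : List (Letter s t)) (a₀ : Letter s t) (hm : 1 ≤ g.length)
    (ω ω' : Boundary s t) (d : ℕ) (hdle : d ≤ g.length) (h2 : ¬ 2 * d = g.length)
    (hpre : ∀ i, i < d → ω.1 i = (g.getD (g.length - 1 - i) a₀).inv)
    (hpre' : ∀ i, i < d → ω'.1 i = (g.getD (g.length - 1 - i) a₀).inv)
    (hfix : ∀ i, ω.1 i =
      if i < g.length - d then g.getD i a₀ else ω.1 (i - (g.length - d) + d))
    (hfix' : ∀ i, ω'.1 i =
      if i < g.length - d then g.getD i a₀ else ω'.1 (i - (g.length - d) + d)) :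
    ω = ω' := by
  have key : ∀ i, ω.1 i = ω'.1 i := by
    intro i
    induction i using Nat.strong_induction_on with
    | _ i IH =>
      rcases Nat.lt_or_ge (2 * d) g.length with hlt | hge
      · rcases Nat.lt_or_ge i (g.length - d) with hi | hi
        · rw [hfix i, hfix' i, if_pos hi, if_pos hi]
        · rw [hfix i, hfix' i, if_neg (by omega), if_neg (by omega)]
          exact IH _ (by omega)
      · have hgt : g.length < 2 * d := by omega
        have hd1 : 1 ≤ d := by omega
        rcases Nat.lt_or_ge i d with hi | hi
        · rw [hpre i hi, hpre' i hi]
        · set j := i - (2 * d - g.length) with hj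
          have hji : j < i := by omega
          have e1 := hfix j
          have e1' := hfix' j
          rw [if_neg (by omega)] at e1 e1'
          have earg : j - (g.length - d) + d = i := by omega
          rw [earg] at e1 e1'
          rw [← e1, ← e1']
          exact IH j hji
  exact Subtype.ext (funext key)

/-- The combinatorial constraints satisfied by the depth of a fixed point. -/
lemma fixed_props (g : List (Letter s t)) (hg : RedWord g) (a₀ : Letter s t)
    (hm : 1 ≤ g.length) (ω : Boundary s t) (d : ℕ) (hdle : d ≤ g.length)
    (hpre : ∀ i, i < d → ω.1 i = (g.getD (g.length - 1 - i) a₀).inv)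
    (hex : d < g.length → ¬ ω.1 d = (g.getD (g.length - 1 - d) a₀).inv)
    (hfix : ∀ i, ω.1 i =
      if i < g.length - d then g.getD i a₀ else ω.1 (i - (g.length - d) + d)) :
    ¬ 2 * d = g.length ∧
      (∀ i, i < min d (g.length - d) →
        g.getD i a₀ = (g.getD (g.length - 1 - i) a₀).inv) ∧
      ¬ g.getD (min d (g.length - d)) a₀ =
          (g.getD (g.length - 1 - min d (g.length - d)) a₀).inv := by
  have h2 : ¬ 2 * d = g.length := by
    intro h2d
    have hd1 : 1 ≤ d := by omega
    have e1 := hfix (d - 1)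
    rw [if_pos (by omega)] at e1
    have e2 := hpre (d - 1) (by omega)
    have harith : g.length - 1 - (d - 1) = d := by omega
    rw [harith] at e2
    -- e1 : ω (d-1) = A (d-1), e2 : ω (d-1) = (A d).inv
    have e3 : g.getD d a₀ = (g.getD (d - 1) a₀).inv := by
      rw [e1.symm.trans e2, Letter.inv_inv]
    have harith2 : d = (d - 1) + 1 := by omega
    rw [harith2] at e3
    exact redword_getD g hg a₀ (d - 1) (by omega) e3
  refine ⟨h2, ?_, ?_⟩
  · intro i hi
    have e1 := hfix i
    rw [if_pos (by omega)] at e1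
    rw [← e1]
    exact hpre i (by omega)
  · rcases Nat.lt_or_ge d (g.length - d) with hlt | hge
    · -- attracting case: `min = d`
      have hmin : min d (g.length - d) = d := by omega
      rw [hmin]
      have e1 := hfix d
      rw [if_pos hlt] at e1
      rw [← e1]
      exact hex (by omega)
    · -- repelling case: `min = g.length - d`
      have hgt : g.length - d < d := by omega
      have hmin : min d (g.length - d) = g.length - d := by omega
      rw [hmin]
      have hd1 : 1 ≤ d := by omega
      -- ω d = ω (g.length - d)
      have e1 := hfix (g.length - d)
      rw [if_neg (by omega)] at e1
      have earg : g.length - d - (g.length - d) + d = d := by omega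
      rw [earg] at e1
      -- ω (g.length - d) = (A (d-1)).inv
      have e2 := hpre (g.length - d) hgt
      have harith : g.length - 1 - (g.length - d) = d - 1 := by omega
      rw [harith] at e2
      -- ω (d-1) = (A (g.length - d)).inv
      have e3 := hpre (d - 1) (by omega)
      have harith2 : g.length - 1 - (d - 1) = g.length - d := by omega
      rw [harith2] at e3
      -- reducedness of ω at position d-1
      have e4 := ω.2 (d - 1)
      have harith3 : d - 1 + 1 = d := by omega
      rw [harith3, e3, Letter.inv_inv] at e4
      -- e4 : ¬ ω d = A (g.length - d)
      intro h
      rw [harith] at h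
      apply e4
      rw [← e1, e2, h]
  -- done

/-- Key lemma: among any three fixed points, two are equal. -/
lemma fixed_at_most_two (g : List (Letter s t)) (hg : RedWord g) (hg' : g ≠ [])
    (a₀ : Letter s t) (ω₁ ω₂ ω₃ : Boundary s t)
    (h₁ : act g ω₁ = ω₁) (h₂ : act g ω₂ = ω₂) (h₃ : act g ω₃ = ω₃) :
    ω₁ = ω₂ ∨ ω₁ = ω₃ ∨ ω₂ = ω₃ := by
  have hm : 1 ≤ g.length := List.length_pos_iff.2 hg'
  -- unpack the spec for each fixed point, rewriting `act g ω = ω`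
  have spec : ∀ ω : Boundary s t, act g ω = ω →
      ∃ d, d ≤ g.length ∧
        (∀ i, i < d → ω.1 i = (g.getD (g.length - 1 - i) a₀).inv) ∧
        (d < g.length → ¬ ω.1 d = (g.getD (g.length - 1 - d) a₀).inv) ∧
        (∀ i, ω.1 i =
          if i < g.length - d then g.getD i a₀ else ω.1 (i - (g.length - d) + d)) := by
    intro ω hω
    obtain ⟨d, hdle, hpre, hex, hact⟩ := act_spec a₀ g hg ω
    refine ⟨d, hdle, hpre, hex, fun i => ?_⟩
    conv_lhs => rw [← hω]
    exact hact i
  obtain ⟨d₁, hdle₁, hpre₁, hex₁, hfix₁⟩ := spec ω₁ h₁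
  obtain ⟨d₂, hdle₂, hpre₂, hex₂, hfix₂⟩ := spec ω₂ h₂
  obtain ⟨d₃, hdle₃, hpre₃, hex₃, hfix₃⟩ := spec ω₃ h₃
  obtain ⟨h2₁, hR₁, hNR₁⟩ := fixed_props g hg a₀ hm ω₁ d₁ hdle₁ hpre₁ hex₁ hfix₁
  obtain ⟨h2₂, hR₂, hNR₂⟩ := fixed_props g hg a₀ hm ω₂ d₂ hdle₂ hpre₂ hex₂ hfix₂
  obtain ⟨h2₃, hR₃, hNR₃⟩ := fixed_props g hg a₀ hm ω₃ d₃ hdle₃ hpre₃ hex₃ hfix₃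
  -- the minimal index where R fails is unique
  have huniq : ∀ e e' : ℕ,
      (∀ i, i < e → g.getD i a₀ = (g.getD (g.length - 1 - i) a₀).inv) →
      ¬ g.getD e a₀ = (g.getD (g.length - 1 - e) a₀).inv →
      (∀ i, i < e' → g.getD i a₀ = (g.getD (g.length - 1 - i) a₀).inv) →
      ¬ g.getD e' a₀ = (g.getD (g.length - 1 - e') a₀).inv →
      e = e' := by
    intro e e' hRe hNe hRe' hNe'
    rcases lt_trichotomy e e' with h | h | h
    · exact absurd (hRe' e h) hNe
    · exact h
    · exact absurd (hRe e' h) hNe'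
  have e12 : min d₁ (g.length - d₁) = min d₂ (g.length - d₂) :=
    huniq _ _ hR₁ hNR₁ hR₂ hNR₂
  have e13 : min d₁ (g.length - d₁) = min d₃ (g.length - d₃) :=
    huniq _ _ hR₁ hNR₁ hR₃ hNR₃
  have pigeon : d₁ = d₂ ∨ d₁ = d₃ ∨ d₂ = d₃ := by omega
  rcases pigeon with h | h | h
  · subst h
    exact Or.inl (fixed_determined g a₀ hm ω₁ ω₂ d₁ hdle₁ h2₁ hpre₁ hpre₂ hfix₁ hfix₂)
  · subst h
    exact Or.inr (Or.inl
      (fixed_determined g a₀ hm ω₁ ω₃ d₁ hdle₁ h2₁ hpre₁ hpre₃ hfix₁ hfix₃))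
  · subst h
    exact Or.inr (Or.inr
      (fixed_determined g a₀ hm ω₂ ω₃ d₂ hdle₂ h2₂ hpre₂ hpre₃ hfix₂ hfix₃))

end AuxFixed

/-- For a nontrivial `g ∈ Γ`, the set of boundary points fixed by
`g` contains at most two points (the attracting and repelling endpoints `g^{±∞}` when
they exist); in particular the fixed-point set is finite. -/
theorem fixedPoints_subset_pair (s t n : ℕ) (hn : 2 ≤ n) (hst : s + 2 * t = n + 1)
    (g : List (Letter s t)) (hg : RedWord g) (hg' : g ≠ []) :
    (∃ p q : Boundary s t, {ω : Boundary s t | act g ω = ω} ⊆ {p, q}) ∧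
      {ω : Boundary s t | act g ω = ω}.Finite := by
  classical
  -- the boundary is nonempty
  have hpoint : Nonempty (Boundary s t) := by
    rcases Nat.eq_zero_or_pos t with ht | ht
    · have hs : 2 < s := by omega
      refine ⟨⟨fun i => .inl ⟨i % 2, by omega⟩, ?_⟩⟩
      intro k
      simp only [Letter.inv, ne_eq, Sum.inl.injEq, Fin.mk.injEq]
      omega
    · refine ⟨⟨fun _ => .inr (⟨0, ht⟩, true), ?_⟩⟩
      intro k
      simp [Letter.inv]
  obtain ⟨ω₀⟩ := hpoint
  obtain ⟨a₀, g', hgeq⟩ := List.exists_cons_of_ne_nil hg'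
  have key := fixed_at_most_two g hg hg' a₀
  have hsub : ∃ p q : Boundary s t, {ω : Boundary s t | act g ω = ω} ⊆ {p, q} := by
    by_cases h1 : ∃ ω : Boundary s t, act g ω = ω
    · obtain ⟨p, hp⟩ := h1
      by_cases h2 : ∃ ω : Boundary s t, act g ω = ω ∧ ω ≠ p
      · obtain ⟨q, hq, hqp⟩ := h2
        refine ⟨p, q, ?_⟩
        intro ω hω
        rcases key ω p q hω hp hq with h | h | h
        · exact Or.inl h
        · exact Or.inr h
        · exact absurd h.symm hqp
      · refine ⟨p, p, ?_⟩
        intro ω hω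
        push_neg at h2
        have := h2 ω hω
        simp [this]
    · exact ⟨ω₀, ω₀, fun ω hω => absurd ⟨ω, hω⟩ h1⟩
  obtain ⟨p, q, hpq⟩ := hsub
  exact ⟨⟨p, q, hpq⟩, ((Set.finite_singleton q).insert p).subset hpq⟩
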